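/- Horizontal recurrence for exponential Riordan arrays via the A-sequence: with d, g ∈ ℚ[[t]], d(0)=g(0)=1, h(t)=t·g(t) having compositional inverse h^{⟨−1⟩}, let A(t) := g(h^{⟨−1⟩}(t)) and a_i := i!·[t^i] A(t). Then the entries r_{n,k} := n!·[t^n] d(t)·h(t)^k/k! satisfy, for all n ≥ k ≥ 1: k·r_{n,k} = n · Σ_{i=0}^{n−k} C(k−1+i, i) · a_i · r_{n−1, k−1+i}. -/

import Mathlib

open PowerSeries

/-- Composition `f(u)` of formal power series, valid when `u` has zero constant
coefficient: then `coeff n (u^k) = 0` for `k > n`, so the `n`-th coefficient of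
`f(u) = Σ_k (coeff k f)·u^k` only involves terms with `k ≤ n`. -/
noncomputable def PowerSeries.comp' {R : Type*} [CommRing R] (f u : PowerSeries R) :
    PowerSeries R :=
  PowerSeries.mk fun n =>
    PowerSeries.coeff n (∑ k ∈ Finset.range (n + 1), PowerSeries.C (PowerSeries.coeff k f) * u ^ k)

open PowerSeries Finset

namespace RiordanAux

variable (u : PowerSeries ℚ)

lemma coeff_pow_eq_zero (hu : constantCoeff u = 0) {n k : ℕ} (h : n < k) :
    coeff n (u ^ k) = 0 := by
  obtain ⟨v, rfl⟩ := PowerSeries.X_dvd_iff.mpr hu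
  rw [mul_pow, PowerSeries.coeff_X_pow_mul', if_neg (by omega)]

lemma coeff_mul_pow_eq_zero (hu : constantCoeff u = 0) (v : PowerSeries ℚ)
    {n k : ℕ} (h : n < k) : coeff n (v * u ^ k) = 0 := by
  rw [PowerSeries.coeff_mul]
  refine Finset.sum_eq_zero fun p hp => ?_
  rw [coeff_pow_eq_zero u hu (lt_of_le_of_lt (by
    have := Finset.HasAntidiagonal.mem_antidiagonal.mp hp; omega) h), mul_zero]

lemma coeff_comp' (f : PowerSeries ℚ) (n : ℕ) :
    coeff n (PowerSeries.comp' f u) =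
      ∑ k ∈ Finset.range (n + 1), coeff k f * coeff n (u ^ k) := by
  rw [PowerSeries.comp', coeff_mk, map_sum]
  exact Finset.sum_congr rfl fun k _ => PowerSeries.coeff_C_mul _ _ _

lemma coeff_comp'_ext (hu : constantCoeff u = 0) (f : PowerSeries ℚ) {n N : ℕ}
    (hN : n < N) :
    coeff n (PowerSeries.comp' f u) =
      ∑ k ∈ Finset.range N, coeff k f * coeff n (u ^ k) := by
  rw [coeff_comp']
  refine Finset.sum_subset (Finset.range_subset_range.mpr hN) fun k _ hk => ?_
  rw [coeff_pow_eq_zero u hu (by simp only [Finset.mem_range] at hk ⊢; omega), mul_zero]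

end RiordanAux

namespace RiordanAux
open Polynomial in
lemma coeff_eval₂ (u : PowerSeries ℚ) (hu : constantCoeff u = 0) (p : Polynomial ℚ) (n : ℕ) :
    PowerSeries.coeff n (p.eval₂ (PowerSeries.C) u) =
      ∑ k ∈ Finset.range (n + 1), p.coeff k * PowerSeries.coeff n (u ^ k) := by
  have hdeg : p.natDegree < max (n + 1) (p.natDegree + 1) := lt_of_lt_of_le (Nat.lt_succ_self _) (le_max_right _ _)
  rw [Polynomial.eval₂_eq_sum_range' (hn := hdeg), map_sum]
  simp only [PowerSeries.coeff_C_mul]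
  symm
  refine Finset.sum_subset (Finset.range_subset_range.mpr (le_max_left _ _)) fun k _ hk => ?_
  rw [coeff_pow_eq_zero u hu (by simp only [Finset.mem_range] at hk ⊢; omega), mul_zero]

lemma coeff_comp'_eval₂ (u : PowerSeries ℚ) (hu : constantCoeff u = 0)
    (f : PowerSeries ℚ) {m n : ℕ} (hmn : m ≤ n) :
    PowerSeries.coeff m ((PowerSeries.trunc (n + 1) f).eval₂ (PowerSeries.C) u) =
      PowerSeries.coeff m (PowerSeries.comp' f u) := by
  rw [coeff_eval₂ u hu, coeff_comp']
  refine Finset.sum_congr rfl fun k hk => ?_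
  rw [PowerSeries.coeff_trunc, if_pos (by simp only [Finset.mem_range] at hk; omega)]

lemma comp'_mul (u : PowerSeries ℚ) (hu : constantCoeff u = 0) (f g : PowerSeries ℚ) :
    PowerSeries.comp' (f * g) u = PowerSeries.comp' f u * PowerSeries.comp' g u := by
  ext n
  have key : PowerSeries.coeff n (PowerSeries.comp' (f * g) u) =
      PowerSeries.coeff n ((PowerSeries.trunc (n+1) f * PowerSeries.trunc (n+1) g).eval₂ (PowerSeries.C) u) := by
    rw [coeff_eval₂ u hu, coeff_comp']
    refine Finset.sum_congr rfl fun k hk => ?_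
    congr 1
    rw [← Polynomial.coeff_coe, Polynomial.coe_mul,
      ← PowerSeries.coeff_mul_eq_coeff_trunc_mul_trunc f g (Finset.mem_range.mp hk)]
  rw [key, Polynomial.eval₂_mul, PowerSeries.coeff_mul, PowerSeries.coeff_mul]
  refine Finset.sum_congr rfl fun pq hpq => ?_
  have hle := Finset.HasAntidiagonal.mem_antidiagonal.mp hpq
  rw [coeff_comp'_eval₂ u hu f (by omega), coeff_comp'_eval₂ u hu g (by omega)]

lemma comp'_one (u : PowerSeries ℚ) : PowerSeries.comp' 1 u = 1 := by
  ext n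
  rw [coeff_comp']
  simp [PowerSeries.coeff_one, ite_mul, Finset.sum_ite_eq']

lemma comp'_pow (u : PowerSeries ℚ) (hu : constantCoeff u = 0) (f : PowerSeries ℚ) (i : ℕ) :
    PowerSeries.comp' (f ^ i) u = (PowerSeries.comp' f u) ^ i := by
  induction i with
  | zero => simpa using comp'_one u
  | succ i ih => rw [pow_succ, pow_succ, comp'_mul u hu, ih]

end RiordanAux

namespace RiordanAux

noncomputable def Aaux (g : PowerSeries ℚ) : ℕ → ℚ
  | m => PowerSeries.coeff m g -
      ∑ i ∈ (Finset.range m).attach,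
        Aaux g i.1 * PowerSeries.coeff m ((PowerSeries.X * g) ^ (i.1 : ℕ))
  decreasing_by exact Finset.mem_range.mp i.2

lemma constCoeff_Xg (g : PowerSeries ℚ) : constantCoeff (PowerSeries.X * g) = 0 := by
  simp

lemma Aaux_spec (g : PowerSeries ℚ) (hg : constantCoeff g = 1) (m : ℕ) :
    PowerSeries.coeff m g =
      ∑ i ∈ Finset.range (m + 1), Aaux g i * PowerSeries.coeff m ((PowerSeries.X * g) ^ i) := by
  have hdiag : PowerSeries.coeff m ((PowerSeries.X * g) ^ m) = 1 := by
    rw [mul_pow]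
    have := PowerSeries.coeff_X_pow_mul (g ^ m) m 0
    simp only [zero_add] at this
    rw [this]
    simp [PowerSeries.coeff_zero_eq_constantCoeff, hg]
  rw [Finset.sum_range_succ, hdiag, mul_one, Aaux]
  rw [Finset.sum_attach (Finset.range m)
    (fun i => Aaux g i * PowerSeries.coeff m ((PowerSeries.X * g) ^ i))]
  ring

lemma coeff_comp'_eq_Aaux (g hinv : PowerSeries ℚ) (hg : constantCoeff g = 1)
    (hinv0 : constantCoeff hinv = 0)
    (hinvEq : PowerSeries.comp' (PowerSeries.X * g) hinv = PowerSeries.X) (j : ℕ) :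
    PowerSeries.coeff j (PowerSeries.comp' g hinv) = Aaux g j := by
  have hXi : ∀ i, PowerSeries.comp' ((PowerSeries.X * g) ^ i) hinv = PowerSeries.X ^ i := by
    intro i; rw [comp'_pow hinv hinv0, hinvEq]
  rw [coeff_comp']
  have step1 : ∀ m ∈ Finset.range (j + 1),
      PowerSeries.coeff m g * PowerSeries.coeff j (hinv ^ m) =
      ∑ i ∈ Finset.range (j + 1),
        Aaux g i * PowerSeries.coeff m ((PowerSeries.X * g) ^ i) *
          PowerSeries.coeff j (hinv ^ m) := by
    intro m hm
    rw [Aaux_spec g hg m, Finset.sum_mul]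
    refine (Finset.sum_subset (Finset.range_subset_range.mpr
      (by simp only [Finset.mem_range] at hm; omega)) fun i _ hi => ?_)
    rw [coeff_pow_eq_zero (PowerSeries.X * g) (constCoeff_Xg g)
      (by simp only [Finset.mem_range] at hi ⊢; omega), mul_zero, zero_mul]
  rw [Finset.sum_congr rfl step1, Finset.sum_comm]
  have step2 : ∀ i ∈ Finset.range (j + 1),
      (∑ m ∈ Finset.range (j + 1),
        Aaux g i * PowerSeries.coeff m ((PowerSeries.X * g) ^ i) *
          PowerSeries.coeff j (hinv ^ m)) =
      Aaux g i * (if j = i then 1 else 0) := by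
    intro i _
    have : (∑ m ∈ Finset.range (j + 1),
        PowerSeries.coeff m ((PowerSeries.X * g) ^ i) * PowerSeries.coeff j (hinv ^ m)) =
        PowerSeries.coeff j (PowerSeries.X ^ i) := by
      rw [← hXi i, coeff_comp']
    rw [← PowerSeries.coeff_X_pow, ← this, Finset.mul_sum]
    exact Finset.sum_congr rfl fun m _ => by ring
  rw [Finset.sum_congr rfl step2]
  simp

end RiordanAux

namespace RiordanAux

lemma main_coeff (d g hinv : PowerSeries ℚ) (hg : constantCoeff g = 1)
    (hinv0 : constantCoeff hinv = 0)
    (hinvEq : PowerSeries.comp' (PowerSeries.X * g) hinv = PowerSeries.X)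
    (n' k' : ℕ) (hkn : k' ≤ n') :
    PowerSeries.coeff (n' + 1) (d * (PowerSeries.X * g) ^ (k' + 1)) =
      ∑ i ∈ Finset.range (n' - k' + 1),
        PowerSeries.coeff i (PowerSeries.comp' g hinv) *
          PowerSeries.coeff n' (d * (PowerSeries.X * g) ^ (k' + i)) := by
  have hfac : d * (PowerSeries.X * g) ^ (k' + 1) =
      PowerSeries.X * (g * (d * (PowerSeries.X * g) ^ k')) := by ring
  rw [hfac, PowerSeries.coeff_succ_X_mul, PowerSeries.coeff_mul]
  have step1 : ∀ p ∈ Finset.HasAntidiagonal.antidiagonal n',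
      PowerSeries.coeff p.1 g * PowerSeries.coeff p.2 (d * (PowerSeries.X * g) ^ k') =
      ∑ i ∈ Finset.range (n' + 1),
        Aaux g i * PowerSeries.coeff p.1 ((PowerSeries.X * g) ^ i) *
          PowerSeries.coeff p.2 (d * (PowerSeries.X * g) ^ k') := by
    intro p hp
    have hp1 : p.1 ≤ n' := by
      have := Finset.HasAntidiagonal.mem_antidiagonal.mp hp; omega
    rw [Aaux_spec g hg p.1, Finset.sum_mul]
    refine Finset.sum_subset (Finset.range_subset_range.mpr (by omega)) fun i _ hi => ?_
    rw [coeff_pow_eq_zero (PowerSeries.X * g) (constCoeff_Xg g)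
      (by simp only [Finset.mem_range] at hi ⊢; omega), mul_zero, zero_mul]
  rw [Finset.sum_congr rfl step1, Finset.sum_comm]
  have step2 : ∀ i ∈ Finset.range (n' + 1),
      (∑ p ∈ Finset.HasAntidiagonal.antidiagonal n',
        Aaux g i * PowerSeries.coeff p.1 ((PowerSeries.X * g) ^ i) *
          PowerSeries.coeff p.2 (d * (PowerSeries.X * g) ^ k')) =
      Aaux g i * PowerSeries.coeff n' (d * (PowerSeries.X * g) ^ (k' + i)) := by
    intro i _
    have hmul : d * (PowerSeries.X * g) ^ (k' + i) =
        (PowerSeries.X * g) ^ i * (d * (PowerSeries.X * g) ^ k') := by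
      rw [pow_add]; ring
    rw [hmul, PowerSeries.coeff_mul, Finset.mul_sum]
    exact Finset.sum_congr rfl fun p _ => by ring
  rw [Finset.sum_congr rfl step2]
  rw [← Finset.sum_subset (Finset.range_subset_range.mpr (by omega : n' - k' + 1 ≤ n' + 1))
    (fun i _ hi => ?_)]
  · exact Finset.sum_congr rfl fun i _ => by
      rw [coeff_comp'_eq_Aaux g hinv hg hinv0 hinvEq]
  · rw [coeff_mul_pow_eq_zero (PowerSeries.X * g) (constCoeff_Xg g) d
      (by simp only [Finset.mem_range] at hi ⊢; omega), mul_zero]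

end RiordanAux


/-- Horizontal recurrence via the A-sequence: with `h = t·g`, compositional inverse
`hinv` of `h` (`hinv(0) = 0`, `h(hinv(t)) = t`), `A = g∘hinv` and `a_i = i!·[t^i] A`,
the entries `r_{n,k} = n!·[t^n] d·h^k/k!` satisfy, for `n ≥ k ≥ 1`:
`k·r_{n,k} = n·Σ_{i=0}^{n-k} C(k-1+i,i)·a_i·r_{n-1,k-1+i}`. -/
theorem riordan_horizontal_recurrence (d g hinv : PowerSeries ℚ)
    (hd : PowerSeries.constantCoeff d = 1)
    (hg : PowerSeries.constantCoeff g = 1)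
    (hinv0 : PowerSeries.constantCoeff hinv = 0)
    (hinvEq : PowerSeries.comp' (PowerSeries.X * g) hinv = PowerSeries.X)
    (r : ℕ → ℕ → ℚ)
    (hr : ∀ n k, r n k =
      (n.factorial : ℚ) * PowerSeries.coeff n (d * (PowerSeries.X * g) ^ k) /
        (k.factorial : ℚ))
    (n k : ℕ) (hk : 1 ≤ k) (hkn : k ≤ n) :
    (k : ℚ) * r n k =
      (n : ℚ) * ∑ i ∈ Finset.range (n - k + 1),
        ((k - 1 + i).choose i : ℚ) *
          ((i.factorial : ℚ) * PowerSeries.coeff i (PowerSeries.comp' g hinv)) *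
          r (n - 1) (k - 1 + i) := by
  obtain ⟨k', rfl⟩ : ∃ k', k = k' + 1 := ⟨k - 1, (Nat.succ_pred_eq_of_pos hk).symm⟩
  obtain ⟨n', rfl⟩ : ∃ n', n = n' + 1 := ⟨n - 1, (Nat.succ_pred_eq_of_pos (by omega)).symm⟩
  have hkn' : k' ≤ n' := by omega
  simp only [Nat.add_sub_cancel, Nat.succ_sub_succ, Nat.sub_zero]
  rw [hr, RiordanAux.main_coeff d g hinv hg hinv0 hinvEq n' k' hkn']
  simp only [Finset.mul_sum, Finset.sum_div]
  refine Finset.sum_congr rfl fun i _ => ?_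
  rw [hr]
  have hch : ((k' + i).choose i : ℚ) * (k'.factorial : ℚ) * (i.factorial : ℚ) =
      ((k' + i).factorial : ℚ) := by
    exact_mod_cast congrArg (Nat.cast : ℕ → ℚ)
      (Nat.add_choose_mul_factorial_mul_factorial k' i)
  have h1 : (k'.factorial : ℚ) ≠ 0 := Nat.cast_ne_zero.mpr (Nat.factorial_ne_zero _)
  have h2 : (i.factorial : ℚ) ≠ 0 := Nat.cast_ne_zero.mpr (Nat.factorial_ne_zero _)
  have h3 : ((k' + i).factorial : ℚ) ≠ 0 := Nat.cast_ne_zero.mpr (Nat.factorial_ne_zero _)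
  have h4 : ((k' + 1).factorial : ℚ) = ((k' : ℚ) + 1) * (k'.factorial : ℚ) := by
    rw [Nat.factorial_succ]; push_cast; ring
  have h5 : ((n' + 1).factorial : ℚ) = ((n' : ℚ) + 1) * (n'.factorial : ℚ) := by
    rw [Nat.factorial_succ]; push_cast; ring
  have hch' : (((k' + i).choose i : ℕ) : ℚ) =
      ((k' + i).factorial : ℚ) / ((k'.factorial : ℚ) * (i.factorial : ℚ)) := by
    rw [eq_div_iff (mul_ne_zero h1 h2), ← hch]; ring
  rw [hch', h4, h5]
  field_simp
  push_cast
  ring
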